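/- For every integer K ≥ 2, 4/3 - 2/(3(3K-1)) < K / H_K, where H_K = ∑_{i=1}^{K} 1/i. -/

import Mathlib

noncomputable def H (K : ℕ) : ℝ := ∑ i ∈ Finset.range K, (1 : ℝ) / (i + 1)

lemma H_pos (K : ℕ) (h : 1 ≤ K) : 0 < H K := by
  apply Finset.sum_pos
  · intro i _
    positivity
  · exact ⟨0, Finset.mem_range.mpr (by omega)⟩

lemma H_le (K : ℕ) (h : 1 ≤ K) : H K ≤ ((K : ℝ) + 1) / 2 := by
  induction K with
  | zero => omega
  | succ n ih =>
    rcases Nat.eq_or_lt_of_le h with h1 | h1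
    · have : n = 0 := by omega
      subst this
      simp [H]
    · have hn : 1 ≤ n := by omega
      have : H (n + 1) = H n + 1 / ((n : ℝ) + 1) := by
        simp [H, Finset.sum_range_succ]
      rw [this]
      have h2 : (1 : ℝ) / ((n : ℝ) + 1) ≤ 1 / 2 := by
        have : (1:ℝ) ≤ (n:ℝ) := by exact_mod_cast hn
        apply one_div_le_one_div_of_le <;> linarith
      have := ih hn
      push_cast
      linarith

theorem cascade_lt_dof (K : ℕ) (hK : 2 ≤ K) :
    (4 : ℝ) / 3 - 2 / (3 * (3 * K - 1)) < (K : ℝ) / H K := by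
  set x : ℝ := (K : ℝ) with hx
  have hx2 : (2 : ℝ) ≤ x := by rw [hx]; exact_mod_cast hK
  have h0 : 0 < H K := H_pos K (by omega)
  have hH : H K ≤ (x + 1) / 2 := H_le K (by omega)
  have hd : (0 : ℝ) < 3 * x - 1 := by linarith
  have heq : (4 : ℝ) / 3 - 2 / (3 * (3 * x - 1)) = (2 * (2 * x - 1)) / (3 * x - 1) := by
    field_simp
    ring
  rw [heq, div_lt_div_iff₀ hd h0]
  nlinarith [sq_nonneg (x - 1)]
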